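/- Let A_η be the amplitude-damping channel on qubits, acting as A_η([[1−β, γ],[γ*, β]]) = [[1−ηβ, √η γ],[√η γ*, ηβ]] with 0 ≤ η ≤ 1. For any binary discrimination game g = diag(g_0, 1−g_0) with 1/2 ≤ g_0 ≤ 1, U(A_η, g) = (1 + √(1 − 4g_0(1−η) + 4g_0²(1−η)))/2, attained by the orthonormal encoding |ψ_0⟩ = √g_0 |0⟩ + √(1−g_0)|1⟩, |ψ_1⟩ = √(1−g_0)|0⟩ − √g_0 |1⟩. -/

import Mathlib

open Matrix Kronecker
open scoped ComplexOrder

noncomputable section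

variable {n : Type*} [Fintype n] [DecidableEq n]

/-- A density operator: positive semidefinite with unit trace. -/
def IsDensity (ρ : Matrix n n ℂ) : Prop := ρ.PosSemidef ∧ ρ.trace = 1

/-- A POVM: positive semidefinite effects summing to the identity. -/
def IsPOVM {m : ℕ} (π : Fin m → Matrix n n ℂ) : Prop :=
  (∀ y, (π y).PosSemidef) ∧ ∑ y, π y = 1

/-- The Choi matrix of a map on matrices. -/
def choi {p q : Type*} [Fintype p] [DecidableEq p] [Fintype q] [DecidableEq q]
    (Φ : Matrix p p ℂ → Matrix q q ℂ) : Matrix (p × q) (p × q) ℂ :=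
  ∑ i, ∑ j, (Matrix.single i j (1 : ℂ)) ⊗ₖ (Φ (Matrix.single i j (1 : ℂ)))

/-- Completely positive trace preserving linear map. -/
def IsCPTP {p q : Type*} [Fintype p] [DecidableEq p] [Fintype q] [DecidableEq q]
    (Φ : Matrix p p ℂ → Matrix q q ℂ) : Prop :=
  IsLinearMap ℂ Φ ∧ (choi Φ).PosSemidef ∧ ∀ ρ, (Φ ρ).trace = ρ.trace

/-- The average payoff of game `g`, channel `Φ`, encoding `ρ`, decoding `π`. -/
def payoff {p q : Type*} [Fintype p] [DecidableEq p] [Fintype q] [DecidableEq q]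
    {nn m : ℕ} (g : Fin nn → Fin m → ℝ) (Φ : Matrix p p ℂ → Matrix q q ℂ)
    (ρ : Fin nn → Matrix p p ℂ) (π : Fin m → Matrix q q ℂ) : ℝ :=
  ∑ x, ∑ y, ((Φ (ρ x) * π y).trace).re * g x y

/-- The communication utility of channel `Φ` for game `g`. -/
def utility {p q : Type*} [Fintype p] [DecidableEq p] [Fintype q] [DecidableEq q]
    {nn m : ℕ} (g : Fin nn → Fin m → ℝ) (Φ : Matrix p p ℂ → Matrix q q ℂ) : ℝ :=
  sSup {u : ℝ | ∃ ρ π, (∀ x, IsDensity (ρ x)) ∧ IsPOVM π ∧ u = payoff g Φ ρ π}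

/-- The trace norm (sum of singular values). -/
def traceNorm (A : Matrix n n ℂ) : ℝ :=
  ∑ i, Real.sqrt ((Matrix.posSemidef_conjTranspose_mul_self A).1.eigenvalues i)

/-- Helstrom utility of a channel for the binary discrimination game diag(g₀, 1-g₀). -/
def helstromUtility {p q : Type*} [Fintype p] [DecidableEq p] [Fintype q] [DecidableEq q]
    (Φ : Matrix p p ℂ → Matrix q q ℂ) (g₀ : ℝ) : ℝ :=
  sSup {u : ℝ | ∃ ρ₀ ρ₁, IsDensity ρ₀ ∧ IsDensity ρ₁ ∧
    u = (1 + traceNorm ((g₀ : ℂ) • Φ ρ₀ - ((1 - g₀ : ℝ) : ℂ) • Φ ρ₁)) / 2}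

/-- The amplitude-damping channel on qubits. -/
def ampDamp (η : ℝ) (ρ : Matrix (Fin 2) (Fin 2) ℂ) : Matrix (Fin 2) (Fin 2) ℂ :=
  !![ρ 0 0 + ((1 - η : ℝ) : ℂ) * ρ 1 1, (Real.sqrt η : ℂ) * ρ 0 1;
     (Real.sqrt η : ℂ) * ρ 1 0, (η : ℂ) * ρ 1 1]

lemma posSemidef_vecMulVec_star {n : Type*} [Fintype n] [DecidableEq n] (v : n → ℂ) :
    (Matrix.vecMulVec v (star v)).PosSemidef := by
  refine Matrix.PosSemidef.of_dotProduct_mulVec_nonneg ?_ ?_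
  · ext i j
    simp [Matrix.conjTranspose_apply, Matrix.vecMulVec_apply, Pi.star_apply, mul_comm]
  · intro x
    have : dotProduct (star x) (Matrix.vecMulVec v (star v) *ᵥ x)
        = star (dotProduct (star v) x) * (dotProduct (star v) x) := by
      simp [dotProduct, Matrix.mulVec, Matrix.vecMulVec_apply, Finset.mul_sum, Finset.sum_mul]
      rw [Finset.sum_comm]
      exact Finset.sum_congr rfl fun i _ => Finset.sum_congr rfl fun j _ => by ring
    rw [this]
    exact star_mul_self_nonneg _

lemma trace_eq_sum_eig {n : Type*} [Fintype n] [DecidableEq n] {A : Matrix n n ℂ}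
    (hA : A.IsHermitian) : A.trace = ∑ i, (hA.eigenvalues i : ℂ) := by
  exact hA.trace_eq_sum_eigenvalues

lemma traceNorm_fin_two (A : Matrix (Fin 2) (Fin 2) ℂ) :
    traceNorm A = Real.sqrt ((Aᴴ * A).trace.re + 2 * Real.sqrt (Complex.normSq A.det)) := by
  have h := Matrix.posSemidef_conjTranspose_mul_self A
  set e := h.1.eigenvalues with he
  have h0 : 0 ≤ e 0 := h.eigenvalues_nonneg 0
  have h1 : 0 ≤ e 1 := h.eigenvalues_nonneg 1
  have htr : (Aᴴ * A).trace = ((e 0 + e 1 : ℝ) : ℂ) := by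
    rw [trace_eq_sum_eig h.1, Fin.sum_univ_two]; push_cast; rfl
  have hS : e 0 + e 1 = (Aᴴ * A).trace.re := by rw [htr]; simp
  have hP : e 0 * e 1 = Complex.normSq A.det := by
    have hd : (Aᴴ * A).det = ((e 0 * e 1 : ℝ) : ℂ) := by
      rw [h.1.det_eq_prod_eigenvalues, Fin.prod_univ_two]; push_cast; rfl
    have hd2 : (Aᴴ * A).det = ((Complex.normSq A.det : ℝ) : ℂ) := by
      rw [Matrix.det_mul, Matrix.det_conjTranspose, Complex.normSq_eq_conj_mul_self]
      rfl
    have := hd.symm.trans hd2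
    exact_mod_cast this
  have key : (Aᴴ * A).trace.re + 2 * Real.sqrt (Complex.normSq A.det)
      = (Real.sqrt (e 0) + Real.sqrt (e 1)) ^ 2 := by
    rw [← hS, ← hP, Real.sqrt_mul h0, add_sq, Real.sq_sqrt h0, Real.sq_sqrt h1]
    ring
  rw [key, Real.sqrt_sq (by positivity)]
  rw [traceNorm, Fin.sum_univ_two]

lemma traceNorm_herm2 (a d : ℝ) (b : ℂ) :
    traceNorm !![(a:ℂ), b; (starRingEnd ℂ) b, (d:ℂ)]
      = Real.sqrt ((a+d)^2 - 2*(a*d - Complex.normSq b) + 2*|a*d - Complex.normSq b|) := by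
  rw [traceNorm_fin_two]
  have h1 : ((!![(a:ℂ), b; (starRingEnd ℂ) b, (d:ℂ)]ᴴ * !![(a:ℂ), b; (starRingEnd ℂ) b, (d:ℂ)]).trace).re
      = a^2 + d^2 + 2*Complex.normSq b := by
    simp [Matrix.trace_fin_two, Matrix.mul_apply, Fin.sum_univ_two, Matrix.conjTranspose_apply,
      Complex.add_re, Complex.mul_re, Complex.normSq_apply]
    ring
  have h2 : (!![(a:ℂ), b; (starRingEnd ℂ) b, (d:ℂ)]).det = ((a*d - Complex.normSq b : ℝ):ℂ) := by
    rw [Matrix.det_fin_two_of]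
    push_cast [Complex.normSq_eq_conj_mul_self]
    ring
  rw [h1, h2]
  rw [Complex.normSq_ofReal, Real.sqrt_mul_self_eq_abs]
  congr 1
  ring

lemma density2 {ρ : Matrix (Fin 2) (Fin 2) ℂ} (h : IsDensity ρ) :
    ∃ (y : ℝ) (γ : ℂ), ρ 0 0 = ((1-y:ℝ):ℂ) ∧ ρ 1 1 = ((y:ℝ):ℂ) ∧ ρ 0 1 = γ
      ∧ ρ 1 0 = (starRingEnd ℂ) γ ∧ 0 ≤ y ∧ y ≤ 1 ∧ Complex.normSq γ ≤ (1-y)*y := by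
  obtain ⟨hpsd, htr⟩ := h
  have hH := hpsd.1
  have him11 : (ρ 1 1).im = 0 := Complex.conj_eq_iff_im.mp (hH.apply 1 1)
  have him00 : (ρ 0 0).im = 0 := Complex.conj_eq_iff_im.mp (hH.apply 0 0)
  have htr2 : ρ 0 0 + ρ 1 1 = 1 := by rw [← Matrix.trace_fin_two]; exact htr
  have hre00 : (ρ 0 0).re = 1 - (ρ 1 1).re := by
    have := congrArg Complex.re htr2
    simp [Complex.add_re] at this
    linarith
  have h10 : ρ 1 0 = (starRingEnd ℂ) (ρ 0 1) := by
    rw [← Complex.star_def]; exact (hH.apply 1 0).symm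
  have h11 : ρ 1 1 = (((ρ 1 1).re : ℝ) : ℂ) := by
    exact (Complex.ext_iff.mpr ⟨rfl, by simp [him11]⟩)
  have h00 : ρ 0 0 = ((1 - (ρ 1 1).re : ℝ) : ℂ) := by
    exact (Complex.ext_iff.mpr ⟨by simp [hre00], by simp [him00]⟩)
  have hy0 : 0 ≤ (ρ 1 1).re := by
    have := hpsd.dotProduct_mulVec_nonneg (Pi.single 1 1)
    simp [dotProduct, mulVec, Fin.sum_univ_two, Pi.single_apply] at this
    exact (Complex.le_def.mp this).1
  have hx0 : 0 ≤ (ρ 0 0).re := by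
    have := hpsd.dotProduct_mulVec_nonneg (Pi.single 0 1)
    simp [dotProduct, mulVec, Fin.sum_univ_two, Pi.single_apply] at this
    exact (Complex.le_def.mp this).1
  refine ⟨(ρ 1 1).re, ρ 0 1, h00, h11, rfl, h10, hy0, by linarith, ?_⟩
  have hdetc : (ρ.det) = ((hH.eigenvalues 0 * hH.eigenvalues 1 : ℝ) : ℂ) := by
    rw [hH.det_eq_prod_eigenvalues, Fin.prod_univ_two]; norm_cast
  have hdet : 0 ≤ (ρ.det).re := by
    rw [hdetc]
    simp only [Complex.ofReal_re]
    exact mul_nonneg (hpsd.eigenvalues_nonneg 0) (hpsd.eigenvalues_nonneg 1)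
  rw [Matrix.det_fin_two, h10, Complex.mul_conj] at hdet
  rw [Complex.sub_re, Complex.mul_re, him11, hre00] at hdet
  simp only [Complex.ofReal_re, him00] at hdet
  linarith

lemma real_ineq (p q η y0 y1 c0 c1 : ℝ) (hpq : p + q = 1) (hq : 0 ≤ q) (hqp : q ≤ p)
    (hη0 : 0 ≤ η) (hη1 : η ≤ 1) (hy0 : 0 ≤ y0) (hy0' : y0 ≤ 1) (hy1 : 0 ≤ y1) (hy1' : y1 ≤ 1)
    (hc0 : 0 ≤ c0) (hc1 : 0 ≤ c1) (hc0' : c0^2 ≤ (1-y0)*y0) (hc1' : c1^2 ≤ (1-y1)*y1) :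
    -(p*q*η) ≤ ((p - q) - η*(p*y0 - q*y1))*(η*(p*y0 - q*y1)) - η*(p*c0+q*c1)^2 := by
  have hp : 0 ≤ p := by linarith
  have hA : (2*c0*c1)^2 ≤ (y0*y1 + (1-y0)*(1-y1))^2 := by
    nlinarith [mul_nonneg (mul_nonneg hy0 hy1) (mul_nonneg (by linarith : (0:ℝ) ≤ 1-y0) (by linarith : (0:ℝ) ≤ 1-y1)), mul_le_mul hc0' hc1' (sq_nonneg c1) (by nlinarith), sq_nonneg (y0*y1 - (1-y0)*(1-y1))]
  have h3 : 2*c0*c1 ≤ y0*y1 + (1-y0)*(1-y1) := by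
    have h1 : 0 ≤ 2*c0*c1 := by positivity
    have h2 : 0 ≤ y0*y1 + (1-y0)*(1-y1) := by nlinarith
    nlinarith [sq_nonneg (2*c0*c1 - (y0*y1 + (1-y0)*(1-y1))), sq_nonneg (2*c0*c1 + (y0*y1 + (1-y0)*(1-y1)))]
  set s := p*y0 - q*y1 with hs
  have hF : (p-q)*s - s^2 + p*q - (p*c0+q*c1)^2
      = p^2*((1-y0)*y0 - c0^2) + q^2*((1-y1)*y1 - c1^2)
        + p*q*(y0*y1+(1-y0)*(1-y1) - 2*c0*c1) := by
    have h1 : q = 1 - p := by linarith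
    rw [hs, h1]; ring
  have hFnn : 0 ≤ (p-q)*s - s^2 + p*q - (p*c0+q*c1)^2 := by
    rw [hF]
    have := mul_nonneg (mul_nonneg hp hq) (by linarith : (0:ℝ) ≤ y0*y1+(1-y0)*(1-y1) - 2*c0*c1)
    nlinarith [sq_nonneg p, sq_nonneg q]
  nlinarith [mul_nonneg hη0 hFnn, mul_nonneg hη0 (mul_nonneg (by linarith : (0:ℝ) ≤ 1 - η) (sq_nonneg s))]

lemma delta_form (η p q y0 y1 : ℝ) (γ0 γ1 : ℂ) (ρ0 ρ1 : Matrix (Fin 2) (Fin 2) ℂ)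
    (h000 : ρ0 0 0 = ((1-y0:ℝ):ℂ)) (h011 : ρ0 1 1 = ((y0:ℝ):ℂ))
    (h001 : ρ0 0 1 = γ0) (h010 : ρ0 1 0 = (starRingEnd ℂ) γ0)
    (h100 : ρ1 0 0 = ((1-y1:ℝ):ℂ)) (h111 : ρ1 1 1 = ((y1:ℝ):ℂ))
    (h101 : ρ1 0 1 = γ1) (h110 : ρ1 1 0 = (starRingEnd ℂ) γ1) :
    ((p:ℝ):ℂ) • ampDamp η ρ0 - ((q:ℝ):ℂ) • ampDamp η ρ1
      = !![((((p-q) - η*(p*y0-q*y1)) : ℝ):ℂ),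
            ((Real.sqrt η : ℝ):ℂ)*(((p:ℝ):ℂ)*γ0-((q:ℝ):ℂ)*γ1);
           (starRingEnd ℂ) (((Real.sqrt η : ℝ):ℂ)*(((p:ℝ):ℂ)*γ0-((q:ℝ):ℂ)*γ1)),
            (((η*(p*y0-q*y1)) : ℝ):ℂ)] := by
  ext i j
  fin_cases i <;> fin_cases j <;>
    simp [ampDamp, Matrix.smul_apply, Matrix.sub_apply, h000, h011, h001, h010,
      h100, h111, h101, h110, _root_.map_mul, _root_.map_sub] <;> push_cast <;> ring

lemma normSq_comb_le (p q : ℝ) (hp : 0 ≤ p) (hq : 0 ≤ q) (γ0 γ1 : ℂ) :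
    Complex.normSq (((p:ℝ):ℂ)*γ0 - ((q:ℝ):ℂ)*γ1)
      ≤ (p * ‖γ0‖ + q * ‖γ1‖)^2 := by
  have habs : ‖((p:ℝ):ℂ)*γ0 - ((q:ℝ):ℂ)*γ1‖
      ≤ p * ‖γ0‖ + q * ‖γ1‖ := by
    calc ‖((p:ℝ):ℂ)*γ0 - ((q:ℝ):ℂ)*γ1‖
        ≤ ‖((p:ℝ):ℂ)*γ0‖ + ‖((q:ℝ):ℂ)*γ1‖ :=
          by simpa using norm_sub_le (((p:ℝ):ℂ)*γ0) (((q:ℝ):ℂ)*γ1)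
      _ = p * ‖γ0‖ + q * ‖γ1‖ := by
          simp [norm_mul, abs_of_nonneg hp, abs_of_nonneg hq]
  calc Complex.normSq (((p:ℝ):ℂ)*γ0 - ((q:ℝ):ℂ)*γ1)
      = (‖((p:ℝ):ℂ)*γ0 - ((q:ℝ):ℂ)*γ1‖)^2 := (Complex.sq_norm _).symm
    _ ≤ (p * ‖γ0‖ + q * ‖γ1‖)^2 := by
        apply pow_le_pow_left₀ (norm_nonneg _) habs

lemma traceNorm_bound (η g₀ : ℝ) (hη0 : 0 ≤ η) (hη1 : η ≤ 1) (hg0 : 1/2 ≤ g₀) (hg1 : g₀ ≤ 1)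
    (ρ0 ρ1 : Matrix (Fin 2) (Fin 2) ℂ) (hρ0 : IsDensity ρ0) (hρ1 : IsDensity ρ1) :
    traceNorm ((g₀:ℂ) • ampDamp η ρ0 - ((1-g₀:ℝ):ℂ) • ampDamp η ρ1)
      ≤ Real.sqrt (1 - 4*g₀*(1-η) + 4*g₀^2*(1-η)) := by
  obtain ⟨y0, γ0, e1, e2, e3, e4, hy0, hy0', hγ0⟩ := density2 hρ0
  obtain ⟨y1, γ1, f1, f2, f3, f4, hy1, hy1', hγ1⟩ := density2 hρ1
  have hrw := delta_form η g₀ (1-g₀) y0 y1 γ0 γ1 ρ0 ρ1 e1 e2 e3 e4 f1 f2 f3 f4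
  rw [hrw, traceNorm_herm2]
  apply Real.sqrt_le_sqrt
  set p := g₀
  set q := 1 - g₀ with hqdef
  set s := p*y0 - q*y1 with hsdef
  set a := (p - q) - η*s with hadef
  set d := η*s with hddef
  set b := ((Real.sqrt η : ℝ):ℂ)*(((p:ℝ):ℂ)*γ0-((q:ℝ):ℂ)*γ1) with hbdef
  have hq0 : 0 ≤ q := by simp [hqdef]; linarith
  have hqp : q ≤ p := by simp [hqdef]; linarith
  have hnb : Complex.normSq b = η * Complex.normSq (((p:ℝ):ℂ)*γ0-((q:ℝ):ℂ)*γ1) := by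
    rw [hbdef, Complex.normSq_mul, Complex.normSq_ofReal, Real.mul_self_sqrt hη0]
  have hN : Complex.normSq (((p:ℝ):ℂ)*γ0-((q:ℝ):ℂ)*γ1)
      ≤ (p * ‖γ0‖ + q * ‖γ1‖)^2 := normSq_comb_le p q (by linarith) hq0 γ0 γ1
  have hDlb : -(p*q*η) ≤ a*d - Complex.normSq b := by
    have h1 := real_ineq p q η y0 y1 (‖γ0‖) (‖γ1‖) (by ring) hq0 hqp
      hη0 hη1 hy0 hy0' hy1 hy1' (norm_nonneg _) (norm_nonneg _)
      (by rw [Complex.sq_norm]; linarith) (by rw [Complex.sq_norm]; linarith)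
    rw [hnb]
    have : η * Complex.normSq (((p:ℝ):ℂ)*γ0-((q:ℝ):ℂ)*γ1)
        ≤ η * (p * ‖γ0‖ + q * ‖γ1‖)^2 :=
      mul_le_mul_of_nonneg_left hN hη0
    calc -(p*q*η) ≤ ((p - q) - η*s)*(η*s) - η*(p * ‖γ0‖ + q * ‖γ1‖)^2 := h1
      _ ≤ a*d - η * Complex.normSq (((p:ℝ):ℂ)*γ0-((q:ℝ):ℂ)*γ1) := by
          rw [hadef, hddef]; linarith
  have hpq : 0 ≤ p*q*η := by positivity
  have had : a + d = p - q := by rw [hadef, hddef]; ring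
  have habs : -2*(a*d - Complex.normSq b) + 2*|a*d - Complex.normSq b| ≤ 4*(p*q*η) := by
    rcases abs_cases (a*d - Complex.normSq b) with ⟨h, _⟩ | ⟨h, _⟩ <;> rw [h] <;> linarith
  have hfin : (p-q)^2 + 4*(p*q*η) = 1 - 4*g₀*(1-η) + 4*g₀^2*(1-η) := by
    rw [hqdef]; ring
  calc (a+d)^2 - 2*(a*d - Complex.normSq b) + 2*|a*d - Complex.normSq b|
      ≤ (p-q)^2 + 4*(p*q*η) := by rw [had]; linarith
    _ = 1 - 4*g₀*(1-η) + 4*g₀^2*(1-η) := hfin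

lemma opt_entries (g₀ : ℝ) (hg0 : 0 ≤ g₀) (hg1 : g₀ ≤ 1) :
    let v0 : Fin 2 → ℂ := ![(Real.sqrt g₀ : ℂ), (Real.sqrt (1 - g₀) : ℂ)]
    let ρ0 := Matrix.vecMulVec v0 (star v0)
    ρ0 0 0 = ((1-(1-g₀):ℝ):ℂ) ∧ ρ0 1 1 = (((1-g₀):ℝ):ℂ)
      ∧ ρ0 0 1 = ((Real.sqrt g₀ * Real.sqrt (1-g₀) : ℝ):ℂ)
      ∧ ρ0 1 0 = (starRingEnd ℂ) ((Real.sqrt g₀ * Real.sqrt (1-g₀) : ℝ):ℂ) := by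
  intro v0 ρ0
  have h1 : Real.sqrt g₀ * Real.sqrt g₀ = g₀ := Real.mul_self_sqrt hg0
  have h2 : Real.sqrt (1-g₀) * Real.sqrt (1-g₀) = 1-g₀ := Real.mul_self_sqrt (by linarith)
  refine ⟨?_, ?_, ?_, ?_⟩ <;>
    simp [ρ0, v0, Matrix.vecMulVec_apply, Complex.conj_ofReal] <;> norm_cast <;>
      first | ring | linear_combination h1 | linear_combination h2

lemma opt_entries' (g₀ : ℝ) (hg0 : 0 ≤ g₀) (hg1 : g₀ ≤ 1) :
    let v1 : Fin 2 → ℂ := ![(Real.sqrt (1 - g₀) : ℂ), -(Real.sqrt g₀ : ℂ)]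
    let ρ1 := Matrix.vecMulVec v1 (star v1)
    ρ1 0 0 = ((1-g₀:ℝ):ℂ) ∧ ρ1 1 1 = ((g₀:ℝ):ℂ)
      ∧ ρ1 0 1 = ((-(Real.sqrt (1-g₀) * Real.sqrt g₀) : ℝ):ℂ)
      ∧ ρ1 1 0 = (starRingEnd ℂ) ((-(Real.sqrt (1-g₀) * Real.sqrt g₀) : ℝ):ℂ) := by
  intro v1 ρ1
  have h1 : Real.sqrt g₀ * Real.sqrt g₀ = g₀ := Real.mul_self_sqrt hg0
  have h2 : Real.sqrt (1-g₀) * Real.sqrt (1-g₀) = 1-g₀ := Real.mul_self_sqrt (by linarith)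
  refine ⟨?_, ?_, ?_, ?_⟩ <;>
    simp [ρ1, v1, Matrix.vecMulVec_apply, Complex.conj_ofReal] <;> norm_cast <;>
      first | ring | linear_combination h1 | linear_combination h2

lemma traceNorm_opt (η g₀ : ℝ) (hη0 : 0 ≤ η) (hη1 : η ≤ 1) (hg0 : 1/2 ≤ g₀) (hg1 : g₀ ≤ 1) :
    traceNorm ((g₀ : ℂ) • ampDamp η
          (Matrix.vecMulVec ![(Real.sqrt g₀ : ℂ), (Real.sqrt (1 - g₀) : ℂ)]
            (star ![(Real.sqrt g₀ : ℂ), (Real.sqrt (1 - g₀) : ℂ)]))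
        - ((1 - g₀ : ℝ) : ℂ) • ampDamp η
          (Matrix.vecMulVec ![(Real.sqrt (1 - g₀) : ℂ), -(Real.sqrt g₀ : ℂ)]
            (star ![(Real.sqrt (1 - g₀) : ℂ), -(Real.sqrt g₀ : ℂ)])))
      = Real.sqrt (1 - 4*g₀*(1-η) + 4*g₀^2*(1-η)) := by
  have hg0' : (0:ℝ) ≤ g₀ := by linarith
  obtain ⟨e1, e2, e3, e4⟩ := opt_entries g₀ hg0' hg1
  obtain ⟨f1, f2, f3, f4⟩ := opt_entries' g₀ hg0' hg1
  rw [delta_form η g₀ (1-g₀) (1-g₀) g₀ _ _ _ _ e1 e2 e3 e4 f1 f2 f3 f4, traceNorm_herm2]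
  have hc : Real.sqrt g₀ * Real.sqrt (1-g₀) * (Real.sqrt g₀ * Real.sqrt (1-g₀))
      = g₀ * (1-g₀) := by
    rw [show Real.sqrt g₀ * Real.sqrt (1-g₀) * (Real.sqrt g₀ * Real.sqrt (1-g₀))
        = (Real.sqrt g₀ * Real.sqrt g₀) * (Real.sqrt (1-g₀) * Real.sqrt (1-g₀)) by ring,
      Real.mul_self_sqrt hg0', Real.mul_self_sqrt (by linarith)]
  have hb : Complex.normSq (((Real.sqrt η : ℝ):ℂ) *
        (((g₀:ℝ):ℂ) * ((Real.sqrt g₀ * Real.sqrt (1-g₀) : ℝ):ℂ)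
          - (((1-g₀:ℝ)):ℂ) * ((-(Real.sqrt (1-g₀) * Real.sqrt g₀) : ℝ):ℂ)))
      = η * (g₀ * (1-g₀)) := by
    rw [show (((g₀:ℝ):ℂ) * ((Real.sqrt g₀ * Real.sqrt (1-g₀) : ℝ):ℂ)
          - (((1-g₀:ℝ)):ℂ) * ((-(Real.sqrt (1-g₀) * Real.sqrt g₀) : ℝ):ℂ))
        = (((g₀ * (Real.sqrt g₀ * Real.sqrt (1-g₀)) + (1-g₀) * (Real.sqrt (1-g₀) * Real.sqrt g₀)) : ℝ):ℂ) by push_cast; ring]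
    rw [Complex.normSq_mul, Complex.normSq_ofReal, Complex.normSq_ofReal,
      Real.mul_self_sqrt hη0]
    nlinarith [hc]
  rw [hb]
  have hs : (1-g₀)*g₀ - (1-g₀)*g₀ = 0 := by ring
  congr 1
  have hd : η*(g₀*(1-g₀)-(1-g₀)*g₀) = 0 := by ring
  rw [hd]
  have habs : |(g₀-(1-g₀) - 0) * 0 - η * (g₀*(1-g₀))|
      = η * (g₀*(1-g₀)) := by
    rw [abs_of_nonpos (by nlinarith)]
    ring
  rw [habs]
  ring

/-- binary discrimination utility of the amplitude-damping channel. -/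
theorem stmt11 (η g₀ : ℝ) (hη0 : 0 ≤ η) (hη1 : η ≤ 1) (hg0 : 1 / 2 ≤ g₀) (hg1 : g₀ ≤ 1) :
    helstromUtility (ampDamp η) g₀
      = (1 + Real.sqrt (1 - 4 * g₀ * (1 - η) + 4 * g₀ ^ 2 * (1 - η))) / 2 ∧
    (1 + traceNorm ((g₀ : ℂ) • ampDamp η
          (Matrix.vecMulVec ![(Real.sqrt g₀ : ℂ), (Real.sqrt (1 - g₀) : ℂ)]
            (star ![(Real.sqrt g₀ : ℂ), (Real.sqrt (1 - g₀) : ℂ)]))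
        - ((1 - g₀ : ℝ) : ℂ) • ampDamp η
          (Matrix.vecMulVec ![(Real.sqrt (1 - g₀) : ℂ), -(Real.sqrt g₀ : ℂ)]
            (star ![(Real.sqrt (1 - g₀) : ℂ), -(Real.sqrt g₀ : ℂ)])))) / 2
      = helstromUtility (ampDamp η) g₀ := by
  have hg0' : (0:ℝ) ≤ g₀ := by linarith
  obtain ⟨e1, e2, _, _⟩ := opt_entries g₀ hg0' hg1
  obtain ⟨f1, f2, _, _⟩ := opt_entries' g₀ hg0' hg1
  have hd0 : IsDensity (Matrix.vecMulVec ![(Real.sqrt g₀ : ℂ), (Real.sqrt (1 - g₀) : ℂ)]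
      (star ![(Real.sqrt g₀ : ℂ), (Real.sqrt (1 - g₀) : ℂ)])) := by
    refine ⟨posSemidef_vecMulVec_star _, ?_⟩
    rw [Matrix.trace_fin_two, e1, e2]
    push_cast; ring
  have hd1 : IsDensity (Matrix.vecMulVec ![(Real.sqrt (1 - g₀) : ℂ), -(Real.sqrt g₀ : ℂ)]
      (star ![(Real.sqrt (1 - g₀) : ℂ), -(Real.sqrt g₀ : ℂ)])) := by
    refine ⟨posSemidef_vecMulVec_star _, ?_⟩
    rw [Matrix.trace_fin_two, f1, f2]
    push_cast; ring
  have hval := traceNorm_opt η g₀ hη0 hη1 hg0 hg1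
  set T := (1 + Real.sqrt (1 - 4 * g₀ * (1 - η) + 4 * g₀ ^ 2 * (1 - η))) / 2 with hT
  set S := {u : ℝ | ∃ ρ₀ ρ₁, IsDensity ρ₀ ∧ IsDensity ρ₁ ∧
    u = (1 + traceNorm ((g₀ : ℂ) • ampDamp η ρ₀ - ((1 - g₀ : ℝ) : ℂ) • ampDamp η ρ₁)) / 2}
    with hS
  have hmem : T ∈ S := ⟨_, _, hd0, hd1, by rw [hval]⟩
  have hub : ∀ u ∈ S, u ≤ T := by
    rintro u ⟨ρ₀, ρ₁, h₀, h₁, rfl⟩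
    have := traceNorm_bound η g₀ hη0 hη1 (by linarith) hg1 ρ₀ ρ₁ h₀ h₁
    rw [hT]
    linarith
  have heq : helstromUtility (ampDamp η) g₀ = T := by
    rw [helstromUtility]
    exact le_antisymm (csSup_le ⟨T, hmem⟩ hub) (le_csSup ⟨T, hub⟩ hmem)
  exact ⟨heq, by rw [hval]; exact heq.symm⟩

end
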